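/- Let (V ⊔ U, 𝒜, ω) be an AND-OR network with weights ω : 𝒜 → ℚ. If t ∈ (ℝ∪{∞})^{V⊔U} satisfies the constraints t_v ≥ max_{(u,v)∈𝒜}(t_u + ω(u,v)) for all v ∈ V and t_u ≥ min_{(v,u)∈𝒜}(t_v + ω(v,u)) for all u ∈ U, then the restriction (t_v)_{v∈V} satisfies, for every u ∈ U: min_{(u,v)∈𝒜}(t_v − ω(u,v)) ≥ min_{(v,u)∈𝒜}(t_v + ω(v,u)). Conversely, if (t_v)_{v∈V} satisfies the latter inequalities, then setting t_u = min_{(v,u)∈𝒜}(t_v + ω(v,u)) for each u ∈ U yields a point satisfying the original constraints. -/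

import Mathlib

/-- Theorem on AND-OR networks.  The network is a bipartite directed graph on
`V ⊔ U` with arc relations `AVU : V → U → Prop`, `AUV : U → V → Prop` (at most
one arc between any pair) and rational weights `ωVU`, `ωUV` on the arcs.  A
vector of starting times `(tV, tU)` in `(ℝ ∪ {∞})^{V ⊔ U}` is feasible when
`t_v ≥ max_{(u,v) ∈ 𝒜} (t_u + ω(u,v))` for all `v ∈ V` (AND) and
`t_u ≥ min_{(v,u) ∈ 𝒜} (t_v + ω(v,u))` for all `u ∈ U` (OR).
First part: if `(tV, tU)` is feasible then `tV` satisfies, for every `u ∈ U`,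
`min_{(v,u) ∈ 𝒜} (t_v + ω(v,u)) ≤ min_{(u,v) ∈ 𝒜} (t_v − ω(u,v))`.
Second part: conversely, if `tV` satisfies these inequalities, then setting
`t_u = min_{(v,u) ∈ 𝒜} (t_v + ω(v,u))` yields a feasible point `(tV, tU)`. -/

lemma aux_le_neg (a b : WithTop ℝ) (c : ℝ) (h : a + (c : WithTop ℝ) ≤ b) :
    a ≤ b + ((-c : ℝ) : WithTop ℝ) := by
  have h2 := add_le_add_left h (((-c : ℝ) : WithTop ℝ))
  calc a = a + ((c : WithTop ℝ) + ((-c : ℝ) : WithTop ℝ)) := by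
        rw [← WithTop.coe_add]; simp
    _ = a + (c : WithTop ℝ) + ((-c : ℝ) : WithTop ℝ) := by rw [add_assoc]
    _ ≤ b + ((-c : ℝ) : WithTop ℝ) := h2

lemma aux_neg_le (a b : WithTop ℝ) (c : ℝ) (h : a ≤ b + ((-c : ℝ) : WithTop ℝ)) :
    a + (c : WithTop ℝ) ≤ b := by
  have h2 := add_le_add_left h ((c : ℝ) : WithTop ℝ)
  calc a + (c : WithTop ℝ) ≤ b + ((-c : ℝ) : WithTop ℝ) + (c : WithTop ℝ) := h2
    _ = b + (((-c : ℝ) : WithTop ℝ) + (c : WithTop ℝ)) := by rw [add_assoc]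
    _ = b := by rw [← WithTop.coe_add]; simp

theorem stmt_19 (V U : Type) [Fintype V] [Fintype U]
    (AVU : V → U → Prop) (AUV : U → V → Prop)
    [∀ v u, Decidable (AVU v u)] [∀ u v, Decidable (AUV u v)]
    (hexcl : ∀ v u, ¬ (AVU v u ∧ AUV u v))
    (ωVU : V → U → ℚ) (ωUV : U → V → ℚ) :
    (∀ (tV : V → WithTop ℝ) (tU : U → WithTop ℝ),
      (∀ v u, AUV u v → tU u + ((ωUV u v : ℝ) : WithTop ℝ) ≤ tV v) →
      (∀ u, ((Finset.univ.filter fun v => AVU v u).inf fun v =>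
          tV v + ((ωVU v u : ℝ) : WithTop ℝ)) ≤ tU u) →
      ∀ u, ((Finset.univ.filter fun v => AVU v u).inf fun v =>
          tV v + ((ωVU v u : ℝ) : WithTop ℝ)) ≤
        ((Finset.univ.filter fun v => AUV u v).inf fun v =>
          tV v + ((-(ωUV u v : ℝ) : ℝ) : WithTop ℝ))) ∧
    (∀ tV : V → WithTop ℝ,
      (∀ u, ((Finset.univ.filter fun v => AVU v u).inf fun v =>
          tV v + ((ωVU v u : ℝ) : WithTop ℝ)) ≤
        ((Finset.univ.filter fun v => AUV u v).inf fun v =>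
          tV v + ((-(ωUV u v : ℝ) : ℝ) : WithTop ℝ))) →
      ∀ tU : U → WithTop ℝ,
        (∀ u, tU u = ((Finset.univ.filter fun v => AVU v u).inf fun v =>
          tV v + ((ωVU v u : ℝ) : WithTop ℝ))) →
        (∀ v u, AUV u v → tU u + ((ωUV u v : ℝ) : WithTop ℝ) ≤ tV v) ∧
        (∀ u, ((Finset.univ.filter fun v => AVU v u).inf fun v =>
            tV v + ((ωVU v u : ℝ) : WithTop ℝ)) ≤ tU u)) := by

  constructor
  · intro tV tU hAND hOR u
    apply Finset.le_inf
    intro v hv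
    rw [Finset.mem_filter] at hv
    calc ((Finset.univ.filter fun v => AVU v u).inf fun v =>
          tV v + ((ωVU v u : ℝ) : WithTop ℝ)) ≤ tU u := hOR u
      _ ≤ tV v + ((-(ωUV u v : ℝ) : ℝ) : WithTop ℝ) :=
          aux_le_neg _ _ _ (hAND v u hv.2)
  · intro tV hineq tU htU
    constructor
    · intro v u hvu
      rw [htU u]
      apply aux_neg_le
      calc ((Finset.univ.filter fun v => AVU v u).inf fun v =>
            tV v + ((ωVU v u : ℝ) : WithTop ℝ)) ≤ _ := hineq u
        _ ≤ tV v + ((-(ωUV u v : ℝ) : ℝ) : WithTop ℝ) := by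
            apply Finset.inf_le
            simp [hvu]
    · intro u; rw [htU u]
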